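/- arXiv:1707.08655 — 9 statements merged into one kernel-verified Lean document; each statement's English description precedes it below -/
import Mathlib

section
/- If T is maximal monotone, z_i, v_i ∈ ℝⁿ, ε_i ≥ 0 with v_i ∈ T^{ε_i}(z_i) for i = 1,…,k, and α_i ≥ 0 with Σα_i = 1, then setting z̄ = Σα_i z_i, v̄ = Σα_i v_i and ε̄ = Σα_i(ε_i + ⟨z_i - z̄, v_i⟩), one has ε̄ ≥ 0 and v̄ ∈ T^{ε̄}(z̄). -/
open RealInnerProductSpace Finset

abbrev Euc (n : ℕ) := EuclideanSpace ℝ (Fin n)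

/-- The ε-enlargement `T^ε` of a point-to-set operator `T`. -/
def enl {n : ℕ} (T : Euc n → Set (Euc n)) (ε : ℝ) (z : Euc n) : Set (Euc n) :=
  {v | ∀ z' v', v' ∈ T z' → ⟪z' - z, v' - v⟫ ≥ -ε}

/-- Monotonicity of a point-to-set operator. -/
def Mono {n : ℕ} (T : Euc n → Set (Euc n)) : Prop :=
  ∀ z v z' v', v ∈ T z → v' ∈ T z' → ⟪z - z', v - v'⟫ ≥ 0

/-- Maximal monotonicity of a point-to-set operator. -/
def MaxMono {n : ℕ} (T : Euc n → Set (Euc n)) : Prop :=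
  Mono T ∧ ∀ S : Euc n → Set (Euc n), Mono S → (∀ z, T z ⊆ S z) → ∀ z, S z = T z

/-- The extended solution set `S_e(A,B)`. -/
def Se {n : ℕ} (A B : Euc n → Set (Euc n)) : Set (Euc n × Euc n) :=
  {p | p.2 ∈ B p.1 ∧ -p.2 ∈ A p.1}

lemma maxMono_mem {n : ℕ} {T : Euc n → Set (Euc n)} (hT : MaxMono T) {z v : Euc n}
    (h : ∀ z' v', v' ∈ T z' → ⟪z' - z, v' - v⟫ ≥ 0) : v ∈ T z := by
  set S : Euc n → Set (Euc n) := fun z₀ => T z₀ ∪ {w | z₀ = z ∧ w = v} with hS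
  have hmono : Mono S := by
    rintro a b c d (hb | ⟨rfl, rfl⟩) (hd | ⟨rfl, rfl⟩)
    · exact hT.1 a b c d hb hd
    · exact h a b hb
    · have h1 := h c d hd
      have h2 : a - c = -(c - a) := (neg_sub c a).symm
      have h3 : b - d = -(d - b) := (neg_sub d b).symm
      rw [h2, h3, inner_neg_neg]
      exact h1
    · simp
  have := hT.2 S hmono (fun z₀ => Set.subset_union_left) z
  rw [← this]
  exact Or.inr ⟨rfl, rfl⟩

theorem weak_transportation_formula {n : ℕ} (T : Euc n → Set (Euc n))
    (hT : MaxMono T) (k : ℕ) (z v : Fin k → Euc n) (ε α : Fin k → ℝ)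
    (hε : ∀ i, 0 ≤ ε i) (hv : ∀ i, v i ∈ enl T (ε i) (z i))
    (hα : ∀ i, 0 ≤ α i) (hsum : ∑ i, α i = 1) :
    0 ≤ ∑ i, α i * (ε i + ⟪z i - ∑ j, α j • z j, v i⟫) ∧
      (∑ i, α i • v i) ∈
        enl T (∑ i, α i * (ε i + ⟪z i - ∑ j, α j • z j, v i⟫)) (∑ i, α i • z i) := by
  set zb : Euc n := ∑ j, α j • z j with hzb
  set vb : Euc n := ∑ j, α j • v j with hvb
  set εb : ℝ := ∑ i, α i * (ε i + ⟪z i - zb, v i⟫) with hεb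
  have key : ∀ z' v' : Euc n,
      ⟪z' - zb, v' - vb⟫ + εb = ∑ i, α i * (⟪z' - z i, v' - v i⟫ + ε i) := by
    intro z' v'
    simp only [hεb, hzb, hvb, inner_sub_left, inner_sub_right, sum_inner, inner_sum,
      real_inner_smul_left, real_inner_smul_right, Finset.mul_sum, mul_add, mul_sub,
      Finset.sum_add_distrib, Finset.sum_sub_distrib]
    have h1 : ∑ i, α i * ⟪z', v'⟫ = ⟪z', v'⟫ := by
      rw [← Finset.sum_mul, hsum, one_mul]
    ring_nf
    linarith [h1, (by rw [← Finset.mul_sum, hsum, mul_one] : ∑ i, ⟪z', v'⟫ * α i = ⟪z', v'⟫)]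
  have hmem : vb ∈ enl T εb zb := by
    intro z' v' hv'
    have h1 : ∑ i, α i * (⟪z' - z i, v' - v i⟫ + ε i) ≥ 0 := by
      apply Finset.sum_nonneg
      intro i _
      have := hv i z' v' hv'
      have : ⟪z' - z i, v' - v i⟫ + ε i ≥ 0 := by linarith
      exact mul_nonneg (hα i) this
    have := key z' v'
    linarith
  refine ⟨?_, hmem⟩
  by_contra h
  push_neg at h
  have hvT : vb ∈ T zb := by
    apply maxMono_mem hT
    intro z' v' hv'
    have := hmem z' v' hv'
    linarith
  have := hmem zb vb hvT
  simp at this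
  linarith
end

section
/- Let A, B : ℝⁿ ⇉ ℝⁿ be maximal monotone. Then the extended solution set S_e(A,B) = {(z,w) : w ∈ B(z), -w ∈ A(z)} is a closed convex subset of ℝⁿ × ℝⁿ. -/
open RealInnerProductSpace Finset

lemma mem_of_char {n : ℕ} {T : Euc n → Set (Euc n)} (hT : MaxMono T) {z v : Euc n}
    (h : ∀ z' v', v' ∈ T z' → 0 ≤ ⟪z - z', v - v'⟫) : v ∈ T z := by
  set S : Euc n → Set (Euc n) := fun z' => T z' ∪ {x | z' = z ∧ x = v} with hS
  have monoS : Mono S := by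
    rintro a u b u' (hu | ⟨rfl, rfl⟩) (hu' | ⟨rfl, rfl⟩)
    · exact hT.1 a u b u' hu hu'
    · have := h a u hu
      rw [ge_iff_le, ← neg_sub b a, ← neg_sub u' u, inner_neg_neg]
      exact this
    · exact h b u' hu'
    · simp
  have hSz := hT.2 S monoS (fun z' x hx => Or.inl hx) z
  have : v ∈ S z := Or.inr ⟨rfl, rfl⟩
  rwa [hSz] at this

lemma combo {n : ℕ} (z1 w1 z2 w2 z' w' : Euc n) (a b : ℝ) (ha : 0 ≤ a) (hb : 0 ≤ b)
    (hab : a + b = 1) (h11 : 0 ≤ ⟪z1 - z', w1 - w'⟫) (h22 : 0 ≤ ⟪z2 - z', w2 - w'⟫)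
    (hc : ⟪z1 - z2, w1 - w2⟫ = 0) :
    0 ≤ ⟪a • z1 + b • z2 - z', a • w1 + b • w2 - w'⟫ := by
  have key : ⟪a • z1 + b • z2 - z', a • w1 + b • w2 - w'⟫ =
      a * ⟪z1 - z', w1 - w'⟫ + b * ⟪z2 - z', w2 - w'⟫ - a * b * ⟪z1 - z2, w1 - w2⟫ := by
    simp only [inner_sub_left, inner_sub_right, inner_add_left, inner_add_right,
      real_inner_smul_left, real_inner_smul_right]
    linear_combination (a * ⟪z1, w1⟫ + b * ⟪z2, w2⟫ - ⟪z', w'⟫) * hab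
  rw [key, hc, mul_zero, sub_zero]
  exact add_nonneg (mul_nonneg ha h11) (mul_nonneg hb h22)

lemma char_of_mem {n : ℕ} {T : Euc n → Set (Euc n)} (hT : Mono T) {z v : Euc n}
    (hv : v ∈ T z) : ∀ z' v', v' ∈ T z' → 0 ≤ ⟪z - z', v - v'⟫ :=
  fun z' v' hv' => hT z v z' v' hv hv'

theorem extended_solution_set_closed_convex {n : ℕ} (A B : Euc n → Set (Euc n))
    (hA : MaxMono A) (hB : MaxMono B) :
    IsClosed (Se A B) ∧ Convex ℝ (Se A B) := by
  have hchar : Se A B = {p : Euc n × Euc n |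
      (∀ z' v', v' ∈ B z' → 0 ≤ ⟪p.1 - z', p.2 - v'⟫) ∧
      (∀ z' v', v' ∈ A z' → 0 ≤ ⟪p.1 - z', -p.2 - v'⟫)} := by
    ext p
    constructor
    · rintro ⟨h1, h2⟩
      exact ⟨char_of_mem hB.1 h1, char_of_mem hA.1 h2⟩
    · rintro ⟨h1, h2⟩
      exact ⟨mem_of_char hB h1, mem_of_char hA h2⟩
  constructor
  · rw [hchar]
    have : {p : Euc n × Euc n |
        (∀ z' v', v' ∈ B z' → 0 ≤ ⟪p.1 - z', p.2 - v'⟫) ∧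
        (∀ z' v', v' ∈ A z' → 0 ≤ ⟪p.1 - z', -p.2 - v'⟫)} =
        (⋂ (z' : Euc n) (v' ∈ B z'), {p : Euc n × Euc n | 0 ≤ ⟪p.1 - z', p.2 - v'⟫}) ∩
        (⋂ (z' : Euc n) (v' ∈ A z'), {p : Euc n × Euc n | 0 ≤ ⟪p.1 - z', -p.2 - v'⟫}) := by
      ext p
      simp [Set.mem_iInter]
    rw [this]
    apply IsClosed.inter
    · refine isClosed_iInter fun z' => isClosed_iInter fun v' => isClosed_iInter fun _ => ?_
      exact isClosed_le continuous_const
        (((continuous_fst.sub continuous_const)).inner ((continuous_snd.sub continuous_const)))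
    · refine isClosed_iInter fun z' => isClosed_iInter fun v' => isClosed_iInter fun _ => ?_
      exact isClosed_le continuous_const
        (((continuous_fst.sub continuous_const)).inner ((continuous_snd.neg.sub continuous_const)))
  · intro p hp q hq a b ha hb hab
    have hc : ⟪p.1 - q.1, p.2 - q.2⟫ = 0 := by
      have h1 : 0 ≤ ⟪p.1 - q.1, p.2 - q.2⟫ := hB.1 p.1 p.2 q.1 q.2 hp.1 hq.1
      have h2 : 0 ≤ ⟪p.1 - q.1, -p.2 - -q.2⟫ := hA.1 p.1 (-p.2) q.1 (-q.2) hp.2 hq.2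
      rw [show -p.2 - -q.2 = -(p.2 - q.2) by abel, inner_neg_right] at h2
      linarith
    have hfst : (a • p + b • q).1 = a • p.1 + b • q.1 := rfl
    have hsnd : (a • p + b • q).2 = a • p.2 + b • q.2 := rfl
    constructor
    · rw [hfst, hsnd]
      apply mem_of_char hB
      intro z' v' hv'
      exact combo p.1 p.2 q.1 q.2 z' v' a b ha hb hab
        (hB.1 p.1 p.2 z' v' hp.1 hv') (hB.1 q.1 q.2 z' v' hq.1 hv') hc
    · rw [hfst, hsnd]
      have hneg : -(a • p.2 + b • q.2) = a • (-p.2) + b • (-q.2) := by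
        rw [neg_add, smul_neg, smul_neg]
      rw [hneg]
      apply mem_of_char hA
      intro z' v' hv'
      have hc' : ⟪p.1 - q.1, -p.2 - -q.2⟫ = 0 := by
        rw [show -p.2 - -q.2 = -(p.2 - q.2) by abel, inner_neg_right, hc, neg_zero]
      exact combo p.1 (-p.2) q.1 (-q.2) z' v' a b ha hb hab
        (hA.1 p.1 (-p.2) z' v' hp.2 hv') (hA.1 q.1 (-q.2) z' v' hq.2 hv') hc'
end

section
/- Consider sequences in ℝⁿ×ℝⁿ generated by (z_k,w_k) = (z_{k-1},w_{k-1}) - ρ_k γ_k ∇φ_k, where each φ_k is an affine function with gradient ∇φ_k, ρ_k ∈ (0,2), and γ_k = 0 if φ_k(z_{k-1},w_{k-1}) ≤ 0 and γ_k = φ_k(z_{k-1},w_{k-1})/‖∇φ_k‖² otherwise. Then for every (z,w) and every k ≥ 1: ½‖(z,w)-(z_k,w_k)‖² + ½ Σ_{j=1}^{k} ρ_j(2-ρ_j) γ_j² ‖∇φ_j‖² = ½‖(z,w)-(z_0,w_0)‖² + Σ_{j=1}^{k} ρ_j γ_j φ_j(z,w). -/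
open RealInnerProductSpace Finset

theorem relaxed_projection_identity {n : ℕ}
    (z w : ℕ → Euc n) (φ : ℕ → Euc n → Euc n → ℝ) (g₁ g₂ : ℕ → Euc n)
    (ρ γ : ℕ → ℝ)
    (haff : ∀ j z₁ w₁ z₂ w₂, φ j z₁ w₁ = φ j z₂ w₂ + ⟪z₁ - z₂, g₁ j⟫ + ⟪w₁ - w₂, g₂ j⟫)
    (hρ : ∀ j, 1 ≤ j → 0 < ρ j ∧ ρ j < 2)
    (hγ : ∀ j, 1 ≤ j → γ j =
      if φ j (z (j - 1)) (w (j - 1)) ≤ 0 then 0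
      else φ j (z (j - 1)) (w (j - 1)) / (‖g₁ j‖ ^ 2 + ‖g₂ j‖ ^ 2))
    (hz : ∀ j, 1 ≤ j → z j = z (j - 1) - (ρ j * γ j) • g₁ j)
    (hw : ∀ j, 1 ≤ j → w j = w (j - 1) - (ρ j * γ j) • g₂ j) :
    ∀ (zz ww : Euc n) (k : ℕ), 1 ≤ k →
      (1 / 2) * (‖zz - z k‖ ^ 2 + ‖ww - w k‖ ^ 2)
        + (1 / 2) * ∑ j ∈ Finset.Icc 1 k,
            ρ j * (2 - ρ j) * γ j ^ 2 * (‖g₁ j‖ ^ 2 + ‖g₂ j‖ ^ 2)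
      = (1 / 2) * (‖zz - z 0‖ ^ 2 + ‖ww - w 0‖ ^ 2)
        + ∑ j ∈ Finset.Icc 1 k, ρ j * γ j * φ j zz ww := by
  have key : ∀ j, 1 ≤ j → γ j * φ j (z (j-1)) (w (j-1)) = γ j ^ 2 * (‖g₁ j‖^2 + ‖g₂ j‖^2) := by
    intro j hj
    rw [hγ j hj]
    split_ifs with h
    · ring
    · rcases eq_or_ne (‖g₁ j‖^2 + ‖g₂ j‖^2) 0 with hN | hN
      · simp [hN]
      · field_simp
  intro zz ww
  suffices h : ∀ k, (1 / 2) * (‖zz - z k‖ ^ 2 + ‖ww - w k‖ ^ 2)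
        + (1 / 2) * ∑ j ∈ Finset.Icc 1 k,
            ρ j * (2 - ρ j) * γ j ^ 2 * (‖g₁ j‖ ^ 2 + ‖g₂ j‖ ^ 2)
      = (1 / 2) * (‖zz - z 0‖ ^ 2 + ‖ww - w 0‖ ^ 2)
        + ∑ j ∈ Finset.Icc 1 k, ρ j * γ j * φ j zz ww by
    intro k _; exact h k
  intro k
  induction k with
  | zero => simp
  | succ k ih =>
    have hj : 1 ≤ k + 1 := by omega
    rw [Finset.sum_Icc_succ_top hj, Finset.sum_Icc_succ_top hj]
    have hz' := hz (k+1) hj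
    have hw' := hw (k+1) hj
    simp only [Nat.add_sub_cancel] at hz' hw'
    have e1 : ‖zz - z (k+1)‖^2 = ‖zz - z k‖^2
        + 2*(ρ (k+1)*γ (k+1))*⟪zz - z k, g₁ (k+1)⟫
        + (ρ (k+1)*γ (k+1))^2*‖g₁ (k+1)‖^2 := by
      rw [hz', show zz - (z k - (ρ (k+1)*γ (k+1)) • g₁ (k+1))
          = (zz - z k) + (ρ (k+1)*γ (k+1)) • g₁ (k+1) by module,
        norm_add_sq_real, real_inner_smul_right, norm_smul]
      simp [mul_pow, sq_abs]
      ring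
    have e2 : ‖ww - w (k+1)‖^2 = ‖ww - w k‖^2
        + 2*(ρ (k+1)*γ (k+1))*⟪ww - w k, g₂ (k+1)⟫
        + (ρ (k+1)*γ (k+1))^2*‖g₂ (k+1)‖^2 := by
      rw [hw', show ww - (w k - (ρ (k+1)*γ (k+1)) • g₂ (k+1))
          = (ww - w k) + (ρ (k+1)*γ (k+1)) • g₂ (k+1) by module,
        norm_add_sq_real, real_inner_smul_right, norm_smul]
      simp [mul_pow, sq_abs]
      ring
    have haff' := haff (k+1) zz ww (z k) (w k)
    have hkey := key (k+1) hj
    simp only [Nat.add_sub_cancel] at hkey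
    linear_combination ih + (1/2)*e1 + (1/2)*e2
      - (ρ (k+1) * γ (k+1)) * haff' - ρ (k+1) * hkey
end

section
/- With the ergodic averages of the general projective splitting method and Γ_k = Σ_{j=1}^k ρ_jγ_j, the ergodic error satisfies ε̄^x_k + ε̄^y_k = -(1/Γ_k) Σ_{j=1}^k ρ_jγ_j φ_j(ȳ_k, b̄_k), where φ_j is the decomposable separator associated with (x_j,b_j,ε^x_j) and (y_j,a_j,ε^y_j). -/
open RealInnerProductSpace Finset

theorem ergodic_error_identity {n : ℕ}
    (x y a b : ℕ → Euc n) (ρ γ εx εy : ℕ → ℝ) (k : ℕ) (hk : 1 ≤ k)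
    (hεx : ∀ j, 1 ≤ j → 0 ≤ εx j) (hεy : ∀ j, 1 ≤ j → 0 ≤ εy j)
    (hpos : ∀ j, 1 ≤ j → 0 < ρ j * γ j)
    (Γ : ℝ) (hΓ : Γ = ∑ j ∈ Finset.Icc 1 k, ρ j * γ j)
    (xbar ybar bbar : Euc n)
    (hxbar : xbar = Γ⁻¹ • ∑ j ∈ Finset.Icc 1 k, (ρ j * γ j) • x j)
    (hybar : ybar = Γ⁻¹ • ∑ j ∈ Finset.Icc 1 k, (ρ j * γ j) • y j)
    (hbbar : bbar = Γ⁻¹ • ∑ j ∈ Finset.Icc 1 k, (ρ j * γ j) • b j) :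
    Γ⁻¹ * (∑ j ∈ Finset.Icc 1 k, ρ j * γ j * (εx j + ⟪x j - xbar, b j⟫))
      + Γ⁻¹ * (∑ j ∈ Finset.Icc 1 k, ρ j * γ j * (εy j + ⟪y j - ybar, a j⟫))
    = -(Γ⁻¹ * ∑ j ∈ Finset.Icc 1 k, ρ j * γ j *
        (⟪ybar - x j, b j - bbar⟫ + ⟪ybar - y j, a j + bbar⟫ - εx j - εy j)) := by
  have hne : (Finset.Icc 1 k).Nonempty := ⟨1, by simp [hk]⟩
  have hΓpos : 0 < Γ := hΓ ▸ Finset.sum_pos (fun j hj => hpos j (Finset.mem_Icc.mp hj).1) hne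
  have hΓ0 : Γ ≠ 0 := ne_of_gt hΓpos
  have hx : ∑ j ∈ Finset.Icc 1 k, (ρ j * γ j) • x j = Γ • xbar := by
    rw [hxbar, smul_smul, mul_inv_cancel₀ hΓ0, one_smul]
  have hy : ∑ j ∈ Finset.Icc 1 k, (ρ j * γ j) • y j = Γ • ybar := by
    rw [hybar, smul_smul, mul_inv_cancel₀ hΓ0, one_smul]
  have hb : ∑ j ∈ Finset.Icc 1 k, (ρ j * γ j) • b j = Γ • bbar := by
    rw [hbbar, smul_smul, mul_inv_cancel₀ hΓ0, one_smul]
  have key : (∑ j ∈ Finset.Icc 1 k, ρ j * γ j * (εx j + ⟪x j - xbar, b j⟫))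
      + (∑ j ∈ Finset.Icc 1 k, ρ j * γ j * (εy j + ⟪y j - ybar, a j⟫))
      + (∑ j ∈ Finset.Icc 1 k, ρ j * γ j *
          (⟪ybar - x j, b j - bbar⟫ + ⟪ybar - y j, a j + bbar⟫ - εx j - εy j)) = 0 := by
    rw [← Finset.sum_add_distrib, ← Finset.sum_add_distrib]
    have step : ∀ j ∈ Finset.Icc 1 k,
        ρ j * γ j * (εx j + ⟪x j - xbar, b j⟫) + ρ j * γ j * (εy j + ⟪y j - ybar, a j⟫)
          + ρ j * γ j * (⟪ybar - x j, b j - bbar⟫ + ⟪ybar - y j, a j + bbar⟫ - εx j - εy j)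
        = ⟪ybar - xbar, (ρ j * γ j) • b j⟫ + ⟪(ρ j * γ j) • (x j - y j), bbar⟫ := by
      intro j hj
      simp only [inner_sub_left, inner_sub_right, inner_add_right, real_inner_smul_left,
        real_inner_smul_right]
      ring
    rw [Finset.sum_congr rfl step, Finset.sum_add_distrib, ← inner_sum, ← sum_inner, hb]
    have hxy : ∑ j ∈ Finset.Icc 1 k, (ρ j * γ j) • (x j - y j) = Γ • xbar - Γ • ybar := by
      simp [smul_sub, Finset.sum_sub_distrib, hx, hy]
    rw [hxy]
    simp only [inner_sub_left, inner_sub_right, real_inner_smul_left, real_inner_smul_right]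
    ring
  linear_combination Γ⁻¹ * key
end

section
/- Under the hypotheses of the general projective splitting iteration with S_e(A,B) nonempty, d₀ = dist((z_0,w_0), S_e(A,B)), and ergodic averages as defined, one has ‖ā_k + b̄_k‖ ≤ 2d₀/Γ_k and ‖x̄_k - ȳ_k‖ ≤ 2d₀/Γ_k for all k ≥ 1. -/
open RealInnerProductSpace Finset

lemma key_identity {n : ℕ} (zj wj p1 p2 xx yy aa bb : Euc n) :
    (⟪zj - xx, bb - wj⟫ + ⟪zj - yy, aa + wj⟫) - (⟪p1 - xx, bb - p2⟫ + ⟪p1 - yy, aa + p2⟫)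
      = ⟪zj - p1, aa + bb⟫ + ⟪wj - p2, xx - yy⟫ := by
  simp only [inner_sub_left, inner_sub_right, inner_add_left, inner_add_right]
  have h1 := real_inner_comm wj xx
  have h2 := real_inner_comm wj yy
  have h3 := real_inner_comm p2 xx
  have h4 := real_inner_comm p2 yy
  have h5 := real_inner_comm zj wj
  have h6 := real_inner_comm p1 p2
  linarith [real_inner_comm zj p2, real_inner_comm p1 wj]

lemma expand_sq {n : ℕ} (u d : Euc n) (t : ℝ) :
    ‖u - t • d‖ ^ 2 = ‖u‖ ^ 2 - 2 * (t * ⟪u, d⟫) + t ^ 2 * ‖d‖ ^ 2 := by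
  rw [@norm_sub_sq_real, real_inner_smul_right, norm_smul, Real.norm_eq_abs, mul_pow, sq_abs]

set_option maxHeartbeats 1600000 in
theorem ergodic_residual_bounds {n : ℕ} (A B : Euc n → Set (Euc n))
    (hA : MaxMono A) (hB : MaxMono B) (hSe : (Se A B).Nonempty)
    (x y a b z w : ℕ → Euc n) (ρ γ εx εy : ℕ → ℝ) (d₀ : ℝ)
    (hεx : ∀ j, 1 ≤ j → 0 ≤ εx j) (hεy : ∀ j, 1 ≤ j → 0 ≤ εy j)
    (hb : ∀ j, 1 ≤ j → b j ∈ enl B (εx j) (x j))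
    (ha : ∀ j, 1 ≤ j → a j ∈ enl A (εy j) (y j))
    (hρ : ∀ j, 1 ≤ j → 0 < ρ j ∧ ρ j < 2)
    (hγpos : ∀ j, 1 ≤ j → 0 < γ j)
    (hγ : ∀ j, 1 ≤ j → γ j * (‖a j + b j‖ ^ 2 + ‖x j - y j‖ ^ 2)
      = ⟪z (j - 1) - x j, b j - w (j - 1)⟫ + ⟪z (j - 1) - y j, a j + w (j - 1)⟫
        - εx j - εy j)
    (hz : ∀ j, 1 ≤ j → z j = z (j - 1) - (ρ j * γ j) • (a j + b j))
    (hw : ∀ j, 1 ≤ j → w j = w (j - 1) - (ρ j * γ j) • (x j - y j))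
    (hd₀ : d₀ = sInf {r : ℝ | ∃ p ∈ Se A B,
      r = Real.sqrt (‖z 0 - p.1‖ ^ 2 + ‖w 0 - p.2‖ ^ 2)})
    (k : ℕ) (hk : 1 ≤ k)
    (Γ : ℝ) (hΓ : Γ = ∑ j ∈ Finset.Icc 1 k, ρ j * γ j) :
    ‖Γ⁻¹ • ((∑ j ∈ Finset.Icc 1 k, (ρ j * γ j) • a j)
        + ∑ j ∈ Finset.Icc 1 k, (ρ j * γ j) • b j)‖ ≤ 2 * d₀ / Γ ∧
    ‖Γ⁻¹ • ((∑ j ∈ Finset.Icc 1 k, (ρ j * γ j) • x j)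
        - ∑ j ∈ Finset.Icc 1 k, (ρ j * γ j) • y j)‖ ≤ 2 * d₀ / Γ := by
  -- Fejér monotonicity
  have fejer : ∀ p ∈ Se A B, ∀ j : ℕ,
      ‖z j - p.1‖ ^ 2 + ‖w j - p.2‖ ^ 2 ≤ ‖z 0 - p.1‖ ^ 2 + ‖w 0 - p.2‖ ^ 2 := by
    intro p hp j
    induction j with
    | zero => exact le_rfl
    | succ j ih =>
      have hj1 : 1 ≤ j + 1 := Nat.le_add_left 1 j
      have hsub : j + 1 - 1 = j := rfl
      have hQ : (0:ℝ) ≤ ‖a (j+1) + b (j+1)‖ ^ 2 + ‖x (j+1) - y (j+1)‖ ^ 2 := by positivity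
      -- separator nonpositive at p
      have hsep : ⟪p.1 - x (j+1), b (j+1) - p.2⟫ + ⟪p.1 - y (j+1), a (j+1) + p.2⟫
          - εx (j+1) - εy (j+1) ≤ 0 := by
        have h1 := hb (j+1) hj1 p.1 p.2 hp.1
        have h2 := ha (j+1) hj1 p.1 (-p.2) hp.2
        have e1 : ⟪p.1 - x (j+1), p.2 - b (j+1)⟫ = -⟪p.1 - x (j+1), b (j+1) - p.2⟫ := by
          rw [← inner_neg_right]; congr 1; abel
        have e2 : ⟪p.1 - y (j+1), -p.2 - a (j+1)⟫ = -⟪p.1 - y (j+1), a (j+1) + p.2⟫ := by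
          rw [← inner_neg_right]; congr 1; abel
        rw [e1] at h1; rw [e2] at h2
        linarith
      -- inner-product lower bound
      have hkey := key_identity (z j) (w j) p.1 p.2 (x (j+1)) (y (j+1)) (a (j+1)) (b (j+1))
      have hγj := hγ (j+1) hj1
      rw [hsub] at hγj
      have hip : ⟪z j - p.1, a (j+1) + b (j+1)⟫ + ⟪w j - p.2, x (j+1) - y (j+1)⟫
          ≥ γ (j+1) * (‖a (j+1) + b (j+1)‖ ^ 2 + ‖x (j+1) - y (j+1)‖ ^ 2) := by
        linarith
      have hzj := hz (j+1) hj1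
      have hwj := hw (j+1) hj1
      rw [hsub] at hzj hwj
      have ez : z (j+1) - p.1 = (z j - p.1) - (ρ (j+1) * γ (j+1)) • (a (j+1) + b (j+1)) := by
        rw [hzj]; abel
      have ew : w (j+1) - p.2 = (w j - p.2) - (ρ (j+1) * γ (j+1)) • (x (j+1) - y (j+1)) := by
        rw [hwj]; abel
      rw [ez, ew, expand_sq, expand_sq]
      have hρj := hρ (j+1) hj1
      have hγp := hγpos (j+1) hj1
      nlinarith [sq_nonneg (γ (j+1)), mul_pos hρj.1 hγp,
        mul_nonneg (mul_nonneg (le_of_lt hρj.1) (le_of_lt hγp)) hQ,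
        mul_nonneg (mul_nonneg (mul_nonneg (le_of_lt hρj.1) (le_of_lt hγp)) (le_of_lt hγp)) hQ]
  -- telescoping sums
  have teleZ : ∀ m : ℕ, 1 ≤ m →
      (∑ j ∈ Finset.Icc 1 m, (ρ j * γ j) • (a j + b j)) = z 0 - z m := by
    intro m hm
    induction m with
    | zero => omega
    | succ m ih =>
      rcases Nat.eq_or_lt_of_le hm with h | h
      · have : m = 0 := by omega
        subst this
        simp [hz 1 le_rfl]
      · have hm1 : 1 ≤ m := by omega
        rw [Finset.sum_Icc_succ_top (by omega : 1 ≤ m + 1), ih hm1,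
          hz (m+1) (by omega)]
        simp only [Nat.add_sub_cancel]
        abel
  have teleW : ∀ m : ℕ, 1 ≤ m →
      (∑ j ∈ Finset.Icc 1 m, (ρ j * γ j) • (x j - y j)) = w 0 - w m := by
    intro m hm
    induction m with
    | zero => omega
    | succ m ih =>
      rcases Nat.eq_or_lt_of_le hm with h | h
      · have : m = 0 := by omega
        subst this
        simp [hw 1 le_rfl]
      · have hm1 : 1 ≤ m := by omega
        rw [Finset.sum_Icc_succ_top (by omega : 1 ≤ m + 1), ih hm1,
          hw (m+1) (by omega)]
        simp only [Nat.add_sub_cancel]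
        abel
  -- Γ > 0
  have hΓpos : 0 < Γ := by
    rw [hΓ]
    apply Finset.sum_pos
    · intro j hj
      simp only [Finset.mem_Icc] at hj
      exact mul_pos (hρ j hj.1).1 (hγpos j hj.1)
    · exact ⟨1, by simp [hk]⟩
  -- distance bounds
  have hbound : ∀ v : Euc n,
      (∀ p ∈ Se A B, ‖v‖ ≤ 2 * Real.sqrt (‖z 0 - p.1‖ ^ 2 + ‖w 0 - p.2‖ ^ 2)) →
      ‖v‖ ≤ 2 * d₀ := by
    intro v hv
    rw [hd₀]
    have hne : {r : ℝ | ∃ p ∈ Se A B,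
        r = Real.sqrt (‖z 0 - p.1‖ ^ 2 + ‖w 0 - p.2‖ ^ 2)}.Nonempty := by
      obtain ⟨p, hp⟩ := hSe
      exact ⟨_, p, hp, rfl⟩
    have : ‖v‖ / 2 ≤ sInf {r : ℝ | ∃ p ∈ Se A B,
        r = Real.sqrt (‖z 0 - p.1‖ ^ 2 + ‖w 0 - p.2‖ ^ 2)} := by
      apply le_csInf hne
      rintro r ⟨p, hp, rfl⟩
      have := hv p hp
      linarith
    linarith
  have hnormbd : ∀ p ∈ Se A B,
      ‖z 0 - z k‖ ≤ 2 * Real.sqrt (‖z 0 - p.1‖ ^ 2 + ‖w 0 - p.2‖ ^ 2) ∧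
      ‖w 0 - w k‖ ≤ 2 * Real.sqrt (‖z 0 - p.1‖ ^ 2 + ‖w 0 - p.2‖ ^ 2) := by
    intro p hp
    have hf := fejer p hp k
    set r := Real.sqrt (‖z 0 - p.1‖ ^ 2 + ‖w 0 - p.2‖ ^ 2) with hr
    have hr0 : 0 ≤ ‖z 0 - p.1‖ ^ 2 + ‖w 0 - p.2‖ ^ 2 := by positivity
    have hr2 : r ^ 2 = ‖z 0 - p.1‖ ^ 2 + ‖w 0 - p.2‖ ^ 2 := Real.sq_sqrt hr0
    have hrnn : 0 ≤ r := Real.sqrt_nonneg _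
    have hz0 : ‖z 0 - p.1‖ ≤ r := by
      have h := Real.sqrt_le_sqrt (show ‖z 0 - p.1‖ ^ 2 ≤ ‖z 0 - p.1‖ ^ 2 + ‖w 0 - p.2‖ ^ 2 by
        linarith [sq_nonneg ‖w 0 - p.2‖])
      rwa [Real.sqrt_sq (norm_nonneg _)] at h
    have hw0 : ‖w 0 - p.2‖ ≤ r := by
      have h := Real.sqrt_le_sqrt (show ‖w 0 - p.2‖ ^ 2 ≤ ‖z 0 - p.1‖ ^ 2 + ‖w 0 - p.2‖ ^ 2 by
        linarith [sq_nonneg ‖z 0 - p.1‖])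
      rwa [Real.sqrt_sq (norm_nonneg _)] at h
    have hzk : ‖z k - p.1‖ ≤ r := by
      have h := Real.sqrt_le_sqrt (show ‖z k - p.1‖ ^ 2 ≤ ‖z 0 - p.1‖ ^ 2 + ‖w 0 - p.2‖ ^ 2 by
        linarith [sq_nonneg ‖w k - p.2‖])
      rwa [Real.sqrt_sq (norm_nonneg _)] at h
    have hwk : ‖w k - p.2‖ ≤ r := by
      have h := Real.sqrt_le_sqrt (show ‖w k - p.2‖ ^ 2 ≤ ‖z 0 - p.1‖ ^ 2 + ‖w 0 - p.2‖ ^ 2 by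
        linarith [sq_nonneg ‖z k - p.1‖])
      rwa [Real.sqrt_sq (norm_nonneg _)] at h
    constructor
    · calc ‖z 0 - z k‖ ≤ ‖z 0 - p.1‖ + ‖p.1 - z k‖ := norm_sub_le_norm_sub_add_norm_sub _ _ _
        _ ≤ r + r := by rw [norm_sub_rev p.1 (z k)]; exact add_le_add hz0 hzk
        _ = 2 * r := by ring
    · calc ‖w 0 - w k‖ ≤ ‖w 0 - p.2‖ + ‖p.2 - w k‖ := norm_sub_le_norm_sub_add_norm_sub _ _ _
        _ ≤ r + r := by rw [norm_sub_rev p.2 (w k)]; exact add_le_add hw0 hwk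
        _ = 2 * r := by ring
  have hzbd : ‖z 0 - z k‖ ≤ 2 * d₀ := hbound _ (fun p hp => (hnormbd p hp).1)
  have hwbd : ‖w 0 - w k‖ ≤ 2 * d₀ := hbound _ (fun p hp => (hnormbd p hp).2)
  have esumZ : (∑ j ∈ Finset.Icc 1 k, (ρ j * γ j) • a j)
      + ∑ j ∈ Finset.Icc 1 k, (ρ j * γ j) • b j = z 0 - z k := by
    rw [← teleZ k hk, ← Finset.sum_add_distrib]
    exact Finset.sum_congr rfl fun j _ => (smul_add _ _ _).symm
  have esumW : (∑ j ∈ Finset.Icc 1 k, (ρ j * γ j) • x j)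
      - ∑ j ∈ Finset.Icc 1 k, (ρ j * γ j) • y j = w 0 - w k := by
    rw [← teleW k hk, ← Finset.sum_sub_distrib]
    exact Finset.sum_congr rfl fun j _ => (smul_sub _ _ _).symm
  rw [esumZ, esumW]
  have hinv : |Γ⁻¹| = Γ⁻¹ := abs_of_pos (inv_pos.mpr hΓpos)
  constructor
  · rw [norm_smul, Real.norm_eq_abs, hinv]
    calc Γ⁻¹ * ‖z 0 - z k‖ ≤ Γ⁻¹ * (2 * d₀) :=
          mul_le_mul_of_nonneg_left hzbd (le_of_lt (inv_pos.mpr hΓpos))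
      _ = 2 * d₀ / Γ := (div_eq_inv_mul _ _).symm
  · rw [norm_smul, Real.norm_eq_abs, hinv]
    calc Γ⁻¹ * ‖w 0 - w k‖ ≤ Γ⁻¹ * (2 * d₀) :=
          mul_le_mul_of_nonneg_left hwbd (le_of_lt (inv_pos.mpr hΓpos))
      _ = 2 * d₀ / Γ := (div_eq_inv_mul _ _).symm
end

section
/- In the exact PSM iteration, where λ_k b_k + x_k = z_{k-1} + λ_k w_{k-1} with b_k ∈ B(x_k), and μ_k a_k + y_k = (1-α_k) z_{k-1} + α_k x_k - μ_k w_{k-1} with a_k ∈ A(y_k), the separator value satisfies φ_k(z_{k-1},w_{k-1}) = (1/μ_k)‖z_{k-1}-y_k‖² + (α_kλ_k/μ_k)⟨z_{k-1}-y_k, w_{k-1}-b_k⟩ + λ_k‖w_{k-1}-b_k‖², and hence φ_k(z_{k-1},w_{k-1}) ≥ (θ_k/μ_k)(‖z_{k-1}-y_k‖² + ‖w_{k-1}-b_k‖²), where θ_k > 0 is the smallest eigenvalue of the 2×2 matrix [[1, -λ_k|α_k|/2], [-λ_k|α_k|/2, λ_kμ_k]]. -/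
open RealInnerProductSpace Finset

set_option maxHeartbeats 1600000 in
theorem psm_separator_lower_bound {n : ℕ} (A B : Euc n → Set (Euc n))
    (lam mu alpha θ : ℝ) (hlam : 0 < lam) (hmu : 0 < mu)
    (hcond : mu / lam - (alpha / 2) ^ 2 > 0)
    (z w x b y a : Euc n)
    (hbB : b ∈ B x) (haA : a ∈ A y)
    (hxb : lam • b + x = z + lam • w)
    (hya : mu • a + y = (1 - alpha) • z + alpha • x - mu • w)
    (hθ : θ = (1 + lam * mu -
      Real.sqrt ((1 + lam * mu) ^ 2 - 4 * (lam * mu - (lam * |alpha| / 2) ^ 2))) / 2) :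
    0 < θ ∧
    ⟪z - x, b - w⟫ + ⟪z - y, a + w⟫
      = (1 / mu) * ‖z - y‖ ^ 2 + (alpha * lam / mu) * ⟪z - y, w - b⟫
        + lam * ‖w - b‖ ^ 2 ∧
    ⟪z - x, b - w⟫ + ⟪z - y, a + w⟫ ≥ (θ / mu) * (‖z - y‖ ^ 2 + ‖w - b‖ ^ 2) := by
  have hmu' : mu ≠ 0 := ne_of_gt hmu
  set u := ‖z - y‖ with hu
  set v := ‖w - b‖ with hv
  set p : ℝ := ⟪z - y, w - b⟫ with hp
  have hu0 : 0 ≤ u := norm_nonneg _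
  have hv0 : 0 ≤ v := norm_nonneg _
  -- vector identities
  have h1 : z - x = lam • (b - w) := by
    rw [smul_sub]; linear_combination (norm := module) -hxb
  have h2 : mu • (a + w) = (z - y) + (alpha * lam) • (w - b) := by
    have h1' : alpha • (z - x) = alpha • (lam • (b - w)) := by rw [h1]
    rw [smul_smul] at h1'
    linear_combination (norm := module) hya - h1'
  -- inner product computations
  have e1 : ⟪z - x, b - w⟫ = lam * v ^ 2 := by
    rw [h1, real_inner_smul_left, real_inner_self_eq_norm_sq, hv, norm_sub_rev]
  have e2 : ⟪z - y, a + w⟫ = (1 / mu) * (u ^ 2 + alpha * lam * p) := by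
    have h3 : mu * ⟪z - y, a + w⟫ = u ^ 2 + alpha * lam * p := by
      rw [← real_inner_smul_right, h2, inner_add_right, real_inner_smul_right,
        real_inner_self_eq_norm_sq, ← hu, ← hp]
    rw [eq_comm, one_div, inv_mul_eq_iff_eq_mul₀ hmu']
    linarith [h3]
  -- real-number facts
  set c : ℝ := lam * |alpha| / 2 with hcdef
  have hc : 0 ≤ c := by rw [hcdef]; positivity
  have hD : c ^ 2 < lam * mu := by
    rw [hcdef]
    have h4 : (alpha / 2) ^ 2 < mu / lam := by linarith [hcond]
    have h5 : (alpha / 2) ^ 2 * lam < mu := (lt_div_iff₀ hlam).mp h4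
    have h7 : (lam * |alpha| / 2) ^ 2 = lam * ((alpha / 2) ^ 2 * lam) := by
      linear_combination (lam ^ 2 / 4) * sq_abs alpha
    rw [h7]
    exact mul_lt_mul_of_pos_left h5 hlam
  have hs0 : 0 ≤ (1 + lam * mu) ^ 2 - 4 * (lam * mu - c ^ 2) := by
    nlinarith [sq_nonneg (1 - lam * mu), sq_nonneg c]
  set s : ℝ := Real.sqrt ((1 + lam * mu) ^ 2 - 4 * (lam * mu - c ^ 2)) with hsdef
  have hs_sq : s ^ 2 = (1 + lam * mu) ^ 2 - 4 * (lam * mu - c ^ 2) := Real.sq_sqrt hs0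
  have hs_nonneg : 0 ≤ s := Real.sqrt_nonneg _
  have hlmpos : 0 < lam * mu := mul_pos hlam hmu
  have hslt : s < 1 + lam * mu := by
    rw [hsdef, Real.sqrt_lt' (by linarith : (0:ℝ) < 1 + lam * mu)]
    linarith [hD]
  have hsge : |1 - lam * mu| ≤ s := by
    rw [← Real.sqrt_sq_eq_abs, hsdef]
    exact Real.sqrt_le_sqrt (by nlinarith [sq_nonneg c])
  have hsge1 : 1 - lam * mu ≤ s := le_trans (le_abs_self _) hsge
  have hsge2 : lam * mu - 1 ≤ s := le_trans (by rw [abs_sub_comm]; exact le_abs_self _) hsge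
  have hθpos : 0 < θ := by rw [hθ]; linarith
  have hθ1 : θ ≤ 1 := by rw [hθ]; linarith
  have hθlm : θ ≤ lam * mu := by rw [hθ]; linarith
  have hquad : (1 - θ) * (lam * mu - θ) = c ^ 2 := by
    rw [hθ]; linear_combination (1/4) * hs_sq
  have hpabs : |p| ≤ u * v := abs_real_inner_le_norm _ _
  clear_value u v p
  have hstep : alpha * lam * p ≥ -(2 * c * (u * v)) := by
    have h7 : |alpha * p| ≤ |alpha| * (u * v) := by
      rw [abs_mul]
      exact mul_le_mul_of_nonneg_left hpabs (abs_nonneg _)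
    have h8 : -(|alpha| * (u * v)) ≤ alpha * p := le_trans (neg_le_neg h7) (neg_abs_le _)
    have h9 := mul_le_mul_of_nonneg_left h8 hlam.le
    calc alpha * lam * p = lam * (alpha * p) := by ring
      _ ≥ lam * -(|alpha| * (u * v)) := h9
      _ = -(2 * c * (u * v)) := by rw [hcdef]; ring
  have hA : 0 ≤ 1 - θ := by linarith
  have hB : 0 ≤ lam * mu - θ := by linarith
  have hmain : 0 ≤ (1 - θ) * u ^ 2 - 2 * c * (u * v) + (lam * mu - θ) * v ^ 2 := by
    rcases eq_or_lt_of_le hA with hA0 | hApos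
    · have hc0 : c = 0 := by
        have : c ^ 2 = 0 := by rw [← hquad, ← hA0]; ring
        nlinarith [this, hc]
      rw [← hA0, hc0]
      nlinarith [mul_nonneg hB (sq_nonneg v)]
    · nlinarith [sq_nonneg ((1 - θ) * u - c * v), hquad, hApos, sq_nonneg v]
  have key : θ * (u ^ 2 + v ^ 2) ≤ u ^ 2 + alpha * lam * p + lam * mu * v ^ 2 := by
    nlinarith [hstep, hmain]
  refine ⟨hθpos, ?_, ?_⟩
  · rw [e1, e2]; field_simp; ring
  · rw [e1, e2, ge_iff_le, ← sub_nonneg]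
    have heq : lam * v ^ 2 + 1 / mu * (u ^ 2 + alpha * lam * p) - θ / mu * (u ^ 2 + v ^ 2)
        = (1 / mu) * ((u ^ 2 + alpha * lam * p + lam * mu * v ^ 2) - θ * (u ^ 2 + v ^ 2)) := by
      field_simp; ring
    rw [heq]
    exact mul_nonneg (by positivity) (sub_nonneg.mpr key)
end

section
/- Under assumptions (A.1) λ_k, μ_k ∈ [λ̲, λ̄] with λ̄ ≥ λ̲ > 0, (A.2) ρ_k ∈ [1-ρ̄, 1+ρ̄] with ρ̄ ∈ [0,1), and (A.3) inf_k(μ_k/λ_k - (α_k/2)²) = ν > 0, the PSM generates b_k ∈ B(x_k), a_k ∈ A(y_k) and for each k ≥ 1 there exists 1 ≤ i ≤ k with ‖a_i + b_i‖ ≤ d₀υ/(√k (1-ρ̄)) and ‖x_i - y_i‖ ≤ d₀υ/(√k (1-ρ̄)), where υ = 2λ̄(1+λ̄²)(1+√(λ̄/λ̲))/(λ̲²ν) and d₀ = dist((z_0,w_0), S_e(A,B)). -/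
open RealInnerProductSpace Finset

set_option maxHeartbeats 1000000


lemma keyA_core (lo hi ν L M α r K s t c : ℝ)
    (hlo : 0 < lo) (hL1 : lo ≤ L) (hL2 : L ≤ hi) (hM1 : lo ≤ M) (hM2 : M ≤ hi)
    (hν : 0 < ν) (hconL : 4*ν*L + α^2*L ≤ 4*M)
    (hrlo : r^2 * lo = hi) (hr1 : 1 ≤ r)
    (hKν : K*(lo^2*ν) = 2*hi*(1+hi^2)*(1+r)) (hKpos : 0 < K)
    (hs : 0 ≤ s) (ht : 0 ≤ t) (hc1 : c ≤ s*t) (hc2 : -(s*t) ≤ c) :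
    (s^2+t^2+2*c) + (M^2*t^2 + L^2*(1-α)^2*s^2 + 2*M*L*(α-1)*c)
      ≤ K*(L*s^2 + M*t^2 + α*L*c) := by
  have hL0 : 0 < L := lt_of_lt_of_le hlo hL1
  have hM0 : 0 < M := lt_of_lt_of_le hlo hM1
  have hhi : 0 < hi := lt_of_lt_of_le hlo (hL1.trans hL2)
  have hr0 : 0 ≤ r := le_trans zero_le_one hr1
  -- α bounds
  have hαsq : α^2 ≤ 4*r^2 := by
    have h1 : α^2*L ≤ 4*M := by nlinarith [mul_pos hν hL0]
    have h2 : 4*M ≤ 4*(r^2*lo) := by rw [hrlo]; linarith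
    have h3 : r^2*lo ≤ r^2*L := by nlinarith [mul_le_mul_of_nonneg_left hL1 (sq_nonneg r)]
    nlinarith [hL0]
  have hαl : -(2*r) ≤ α := by nlinarith [sq_nonneg (α + 2*r), hr0]
  have hlo2ν : 0 < lo^2*ν := by positivity
  set P : ℝ := K*L - 1 - L^2*(1-α)^2 with hPdef
  set Q : ℝ := K*M - 1 - M^2 with hQdef
  set R : ℝ := K*α*L - 2 + 2*M*L*(1-α) with hRdef
  -- Q > 0
  have hνL : ν*L ≤ M := by nlinarith [sq_nonneg α]
  have hνlo : ν*lo ≤ hi := by nlinarith [mul_le_mul_of_nonneg_left hL1 hν.le]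
  have hQpos : 0 < Q := by
    have e1 : lo^2*ν ≤ lo*hi := by nlinarith [hνlo, hlo]
    have e2 : (1+M^2) ≤ (1+hi^2) := by nlinarith [pow_le_pow_left₀ hM0.le hM2 2]
    have e3 : (1+M^2)*(lo^2*ν) ≤ (1+hi^2)*(lo*hi) :=
      mul_le_mul e2 e1 (by positivity) (by positivity)
    have e4 : (1+hi^2)*(lo*hi) ≤ (1+hi^2)*(M*hi) := by
      have h := mul_le_mul_of_nonneg_right hM1 hhi.le
      nlinarith [sq_nonneg hi, h]
    have e5 : (1+hi^2)*(M*hi) < (2*hi*(1+hi^2)*(1+r))*M := by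
      nlinarith [mul_pos (mul_pos hhi hM0) (show (0:ℝ) < (1+hi^2)*(1+2*r)
        by positivity)]
    have h6 : (1 + M^2)*(lo^2*ν) < (K*M)*(lo^2*ν) := by
      calc (1 + M^2)*(lo^2*ν) ≤ (1+hi^2)*(lo*hi) := e3
        _ ≤ (1+hi^2)*(M*hi) := e4
        _ < (2*hi*(1+hi^2)*(1+r))*M := e5
        _ = (K*M)*(lo^2*ν) := by rw [← hKν]; ring
    have h7 : 1 + M^2 < K*M := lt_of_mul_lt_mul_right h6 (le_of_lt hlo2ν)
    simp only [hQdef]; linarith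
  -- T bound
  have hT : L + M - α*L + L*M^2 + L^2*M*(1-α) ≤ K*ν*L^2 := by
    have hM2sq : M^2 ≤ hi^2 := pow_le_pow_left₀ hM0.le hM2 2
    have hL2sq : L^2 ≤ hi^2 := pow_le_pow_left₀ hL0.le hL2 2
    have b1 : L*M^2 ≤ hi*hi^2 := mul_le_mul hL2 hM2sq (sq_nonneg M) hhi.le
    have b2 : L^2*M ≤ hi^2*hi := mul_le_mul hL2sq hM2 hM0.le (by positivity)
    have hLM : L*M ≤ hi*hi := mul_le_mul hL2 hM2 hM0.le hhi.le
    have hLf : L*(1+L*M) ≤ hi*(1+hi^2) := by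
      apply mul_le_mul hL2 (by nlinarith [hLM]) (by positivity) hhi.le
    have b3 : (-α)*(L*(1+L*M)) ≤ (2*r)*(hi*(1+hi^2)) :=
      mul_le_mul (by linarith) hLf (by positivity) (by positivity)
    have h1 : L + M - α*L + L*M^2 + L^2*M*(1-α) ≤ 2*hi*(1+hi^2)*(1+r) := by
      nlinarith [b1, b2, b3]
    have h3 : K*ν*lo^2 ≤ K*ν*L^2 := by
      have hKν0 : 0 < K*ν := mul_pos hKpos hν
      nlinarith [mul_le_mul_of_nonneg_left (pow_le_pow_left₀ hlo.le hL1 2) hKν0.le]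
    have h2 : 2*hi*(1+hi^2)*(1+r) = K*ν*lo^2 := by rw [← hKν]; ring
    linarith
  -- discriminant
  have hD : R^2 ≤ 4*P*Q := by
    have hid : 4*P*Q - R^2 = K^2*L*(4*M - α^2*L)
        - 4*K*(L + M - α*L + L*M^2 + L^2*M*(1-α)) + 4*(M + L*(1-α))^2 := by
      simp only [hPdef, hQdef, hRdef]; ring
    have h1 := mul_le_mul_of_nonneg_left (show 4*ν*L ≤ 4*M - α^2*L by linarith)
      (show (0:ℝ) ≤ K^2*L by positivity)
    have h2 := mul_le_mul_of_nonneg_left hT (show (0:ℝ) ≤ 4*K by positivity)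
    have heq : K^2*L*(4*ν*L) = 4*K*(K*ν*L^2) := by ring
    linarith [hid, h1, h2, heq, sq_nonneg (M + L*(1-α))]
  -- P ≥ 0
  have hP0 : 0 ≤ P := by
    by_contra hc
    push_neg at hc
    have h1 : 0 < (-P)*Q := mul_pos (neg_pos.2 hc) hQpos
    nlinarith [sq_nonneg R, hD]
  -- final quadratic
  have hmain : 0 ≤ P*s^2 + Q*t^2 + R*c := by
    rcases eq_or_lt_of_le hP0 with hP | hP
    · have hPQ : (4:ℝ)*P*Q = 0 := by rw [← hP]; ring
      have h0 : R^2 ≤ 0 := by linarith [hD, hPQ]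
      have h1 : R^2 = 0 := le_antisymm h0 (sq_nonneg R)
      have hR0 : R = 0 := by
        exact pow_eq_zero_iff two_ne_zero |>.mp h1
      have h2 : P*s^2 = 0 := by rw [← hP]; ring
      have h3 : 0 ≤ Q*t^2 := mul_nonneg hQpos.le (sq_nonneg t)
      rw [hR0]; linarith [h2, h3]
    · set AR : ℝ := |R| with hARdef
      have hAR0 : 0 ≤ AR := abs_nonneg R
      have hRc : -(AR*(s*t)) ≤ R*c := by
        rcases le_or_gt 0 R with h | h
        · rw [hARdef, abs_of_nonneg h]; linarith [mul_le_mul_of_nonneg_left hc2 h]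
        · rw [hARdef, abs_of_neg h]; linarith [mul_le_mul_of_nonpos_left hc1 h.le]
      have h4 : AR^2 ≤ 4*P*Q := by rw [hARdef, sq_abs]; exact hD
      have key : AR*(s*t) ≤ P*s^2 + Q*t^2 := by
        have c1 : 0 ≤ (2*P*s - AR*t)^2 := sq_nonneg _
        have c2 : 0 ≤ (4*P*Q - AR^2)*t^2 := mul_nonneg (by linarith) (sq_nonneg t)
        have cid : 4*P*(P*s^2 + Q*t^2 - AR*(s*t))
            = (2*P*s - AR*t)^2 + (4*P*Q - AR^2)*t^2 := by ring
        have c3 : 0 ≤ 4*P*(P*s^2 + Q*t^2 - AR*(s*t)) := by linarith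
        by_contra hcc
        push_neg at hcc
        have c5 : 4*P*(P*s^2 + Q*t^2 - AR*(s*t)) < 0 :=
          mul_neg_of_pos_of_neg (by linarith) (by linarith)
        linarith
      linarith
  have hfin : (s^2+t^2+2*c) + (M^2*t^2 + L^2*(1-α)^2*s^2 + 2*M*L*(α-1)*c)
      = K*(L*s^2 + M*t^2 + α*L*c) - (P*s^2 + Q*t^2 + R*c) := by
    simp only [hPdef, hQdef, hRdef]; ring
  linarith

lemma keyA (lo hi ν L M α r K s t c : ℝ)
    (hlo : 0 < lo) (hL1 : lo ≤ L) (hL2 : L ≤ hi) (hM1 : lo ≤ M) (hM2 : M ≤ hi)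
    (hν : 0 < ν) (hcon : ν ≤ M / L - (α/2)^2)
    (hr : r = Real.sqrt (hi/lo))
    (hK : K = 2*hi*(1+hi^2)*(1+r)/(lo^2*ν))
    (hs : 0 ≤ s) (ht : 0 ≤ t) (hc1 : c ≤ s*t) (hc2 : -(s*t) ≤ c) :
    (s^2+t^2+2*c) + (M^2*t^2 + L^2*(1-α)^2*s^2 + 2*M*L*(α-1)*c)
      ≤ K*(L*s^2 + M*t^2 + α*L*c) := by
  have hL0 : 0 < L := lt_of_lt_of_le hlo hL1
  have hhi : 0 < hi := lt_of_lt_of_le hlo (hL1.trans hL2)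
  have hr0 : 0 ≤ r := hr ▸ Real.sqrt_nonneg _
  have hrsq : r^2 = hi/lo := by rw [hr]; exact Real.sq_sqrt (by positivity)
  have hrlo : r^2 * lo = hi := by rw [hrsq]; field_simp
  have hr2 : 1 ≤ r^2 := by nlinarith [hrlo, hL1.trans hL2]
  have hr1 : 1 ≤ r := by nlinarith [hr2, hr0]
  have hconL : 4*ν*L + α^2*L ≤ 4*M := by
    have h := (le_div_iff₀ hL0).mp (by linarith : ν + (α/2)^2 ≤ M / L)
    nlinarith [h]
  have hlo2ν : 0 < lo^2*ν := by positivity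
  have hKpos : 0 < K := by rw [hK]; positivity
  have hKν : K*(lo^2*ν) = 2*hi*(1+hi^2)*(1+r) := by rw [hK]; field_simp
  exact keyA_core lo hi ν L M α r K s t c hlo hL1 hL2 hM1 hM2 hν hconL hrlo hr1
    hKν hKpos hs ht hc1 hc2

lemma norm_comb_sq {n : ℕ} (u v : Euc n) (p q : ℝ) :
    ‖p • u + q • v‖^2 = p^2*‖u‖^2 + 2*(p*q)*⟪u,v⟫ + q^2*‖v‖^2 := by
  rw [← real_inner_self_eq_norm_sq]
  simp only [inner_add_left, inner_add_right, real_inner_smul_left, real_inner_smul_right,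
    real_inner_self_eq_norm_sq, real_inner_comm v u, norm_smul, Real.norm_eq_abs,
    mul_pow, sq_abs]
  ring

lemma norm_sub_smul_sq {n : ℕ} (A B : Euc n) (r : ℝ) :
    ‖A - r•B‖^2 = ‖A‖^2 - 2*r*⟪A,B⟫ + r^2*‖B‖^2 := by
  rw [← real_inner_self_eq_norm_sq]
  simp only [inner_sub_left, inner_sub_right, real_inner_smul_left, real_inner_smul_right,
    real_inner_self_eq_norm_sq, real_inner_comm B A, norm_smul, Real.norm_eq_abs,
    mul_pow, sq_abs]
  ring

lemma inner_affine {n : ℕ} (x y a b z w z' w' : Euc n) :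
    ⟪z - z', a + b⟫ + ⟪w - w', x - y⟫
      = (⟪z - x, b - w⟫ + ⟪z - y, a + w⟫) - (⟪z' - x, b - w'⟫ + ⟪z' - y, a + w'⟫) := by
  simp only [inner_sub_left, inner_sub_right, inner_add_left, inner_add_right]
  linarith [real_inner_comm w z, real_inner_comm w' z', real_inner_comm x w,
    real_inner_comm y w, real_inner_comm x w', real_inner_comm y w',
    real_inner_comm w' z, real_inner_comm w z']


lemma gam_lb {n : ℕ} (zkm x y a b wkm : Euc n) (lo hi ν L M al r K : ℝ)
    (hlo : 0 < lo) (hL1 : lo ≤ L) (hL2 : L ≤ hi) (hM1 : lo ≤ M) (hM2 : M ≤ hi)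
    (hν : 0 < ν) (hcon : ν ≤ M / L - (al/2)^2)
    (hr : r = Real.sqrt (hi/lo)) (hK : K = 2*hi*(1+hi^2)*(1+r)/(lo^2*ν))
    (hxb : L • b + x = zkm + L • wkm)
    (hya : M • a + y = (1 - al) • zkm + al • x - M • wkm) :
    ‖a + b‖^2 + ‖x - y‖^2 ≤ K * (⟪zkm - x, b - wkm⟫ + ⟪zkm - y, a + wkm⟫) := by
  have hv : zkm - x = L • (b - wkm) := by
    rw [smul_sub]; linear_combination (norm := module) -hxb
  have hu : zkm - y = (al*L) • (b - wkm) + M • (a + wkm) := by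
    linear_combination (norm := module) -hya + al • hv
  have hab : a + b = (a + wkm) + (b - wkm) := by abel
  have hxy : x - y = M • (a + wkm) + ((al-1)*L) • (b - wkm) := by
    linear_combination (norm := module) hu - hv
  set u : Euc n := a + wkm with hudef
  set v : Euc n := b - wkm with hvdef
  set s : ℝ := ‖v‖ with hsdef
  set t : ℝ := ‖u‖ with htdef
  set c : ℝ := ⟪u,v⟫ with hcdef
  have hphi : ⟪zkm - x, v⟫ + ⟪zkm - y, u⟫ = L*s^2 + M*t^2 + al*L*c := by
    rw [hv, hu, real_inner_smul_left, inner_add_left, real_inner_smul_left,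
      real_inner_smul_left, real_inner_self_eq_norm_sq, real_inner_self_eq_norm_sq,
      real_inner_comm u v]
    ring
  have hG1 : ‖a + b‖^2 = t^2 + 2*c + s^2 := by
    rw [hab, norm_add_sq_real]
  have hG2 : ‖x - y‖^2 = M^2*t^2 + 2*(M*((al-1)*L))*c + ((al-1)*L)^2*s^2 :=
    by rw [hxy]; exact norm_comb_sq u v M ((al-1)*L)
  have hcs := abs_real_inner_le_norm u v
  have hc1 : c ≤ s*t := by rw [hsdef, htdef]; nlinarith [abs_le.mp hcs]
  have hc2 : -(s*t) ≤ c := by rw [hsdef, htdef]; nlinarith [abs_le.mp hcs]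
  have hkey := keyA lo hi ν L M al r K s t c hlo hL1 hL2 hM1 hM2 hν hcon hr hK
    (norm_nonneg v) (norm_nonneg u) hc1 hc2
  rw [hphi, hG1, hG2]
  nlinarith [hkey]

theorem psm_pointwise_complexity {n : ℕ} (A B : Euc n → Set (Euc n))
    (hA : MaxMono A) (hB : MaxMono B) (hSe : (Se A B).Nonempty)
    (x y a b z w : ℕ → Euc n) (lam mu alpha ρ γ : ℕ → ℝ)
    (lamLo lamHi ρbar ν d₀ : ℝ)
    (hlam : 0 < lamLo) (hlamle : lamLo ≤ lamHi)
    (hA1 : ∀ k, 1 ≤ k → lam k ∈ Set.Icc lamLo lamHi ∧ mu k ∈ Set.Icc lamLo lamHi)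
    (hρbar : ρbar ∈ Set.Ico (0 : ℝ) 1)
    (hA2 : ∀ k, 1 ≤ k → ρ k ∈ Set.Icc (1 - ρbar) (1 + ρbar))
    (hν : 0 < ν)
    (hA3 : ∀ k, 1 ≤ k → ν ≤ mu k / lam k - (alpha k / 2) ^ 2)
    (hbB : ∀ k, 1 ≤ k → b k ∈ B (x k)) (haA : ∀ k, 1 ≤ k → a k ∈ A (y k))
    (hxb : ∀ k, 1 ≤ k → lam k • b k + x k = z (k - 1) + lam k • w (k - 1))
    (hya : ∀ k, 1 ≤ k →
      mu k • a k + y k = (1 - alpha k) • z (k - 1) + alpha k • x k - mu k • w (k - 1))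
    (hnt : ∀ k, 1 ≤ k → ‖a k + b k‖ ^ 2 + ‖x k - y k‖ ^ 2 ≠ 0)
    (hγ : ∀ k, 1 ≤ k → γ k =
      (⟪z (k - 1) - x k, b k - w (k - 1)⟫ + ⟪z (k - 1) - y k, a k + w (k - 1)⟫)
        / (‖a k + b k‖ ^ 2 + ‖x k - y k‖ ^ 2))
    (hz : ∀ k, 1 ≤ k → z k = z (k - 1) - (ρ k * γ k) • (a k + b k))
    (hw : ∀ k, 1 ≤ k → w k = w (k - 1) - (ρ k * γ k) • (x k - y k))
    (hd₀ : d₀ = sInf {r : ℝ | ∃ p ∈ Se A B,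
      r = Real.sqrt (‖z 0 - p.1‖ ^ 2 + ‖w 0 - p.2‖ ^ 2)})
    (υ : ℝ)
    (hυ : υ = 2 * lamHi * (1 + lamHi ^ 2) * (1 + Real.sqrt (lamHi / lamLo))
      / (lamLo ^ 2 * ν)) :
    ∀ k : ℕ, 1 ≤ k →
      (b k ∈ B (x k) ∧ a k ∈ A (y k)) ∧
      ∃ i : ℕ, 1 ≤ i ∧ i ≤ k ∧
        ‖a i + b i‖ ≤ d₀ * υ / (Real.sqrt k * (1 - ρbar)) ∧
        ‖x i - y i‖ ≤ d₀ * υ / (Real.sqrt k * (1 - ρbar)) := by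
  obtain ⟨hρ0, hρ1⟩ := hρbar
  have hρpos : 0 < 1 - ρbar := by linarith
  have hhi : 0 < lamHi := lt_of_lt_of_le hlam hlamle
  have hKpos : 0 < υ := by
    rw [hυ]; positivity
  set G : ℕ → ℝ := fun j => ‖a j + b j‖^2 + ‖x j - y j‖^2 with hGdef
  set φ : ℕ → ℝ := fun j =>
    ⟪z (j-1) - x j, b j - w (j-1)⟫ + ⟪z (j-1) - y j, a j + w (j-1)⟫ with hφdef
  have hGpos : ∀ j, 1 ≤ j → 0 < G j := by
    intro j hj
    have h0 : 0 ≤ G j := by simp only [hGdef]; positivity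
    exact lt_of_le_of_ne h0 (Ne.symm (hnt j hj))
  have hKG : ∀ j, 1 ≤ j → G j ≤ υ * φ j := by
    intro j hj
    exact gam_lb (z (j-1)) (x j) (y j) (a j) (b j) (w (j-1)) lamLo lamHi ν
      (lam j) (mu j) (alpha j) (Real.sqrt (lamHi/lamLo)) υ hlam
      (hA1 j hj).1.1 (hA1 j hj).1.2 (hA1 j hj).2.1 (hA1 j hj).2.2 hν
      (hA3 j hj) rfl hυ (hxb j hj) (hya j hj)
  have hγlb : ∀ j, 1 ≤ j → 1/υ ≤ γ j := by
    intro j hj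
    rw [hγ j hj]
    rw [div_le_div_iff₀ hKpos (hGpos j hj)]
    have := hKG j hj
    simp only [hGdef, hφdef] at *
    nlinarith [this]
  have hγpos : ∀ j, 1 ≤ j → 0 < γ j :=
    fun j hj => lt_of_lt_of_le (by positivity) (hγlb j hj)
  have hφγG : ∀ j, 1 ≤ j → γ j * G j = φ j := by
    intro j hj
    rw [hγ j hj]
    exact div_mul_cancel₀ _ (hnt j hj)
  -- Fejér step
  have hstep : ∀ p ∈ Se A B, ∀ j, 1 ≤ j →
      ‖z j - p.1‖^2 + ‖w j - p.2‖^2 + (1-ρbar)^2*((γ j)^2*(G j))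
        ≤ ‖z (j-1) - p.1‖^2 + ‖w (j-1) - p.2‖^2 := by
    intro p hp j hj
    obtain ⟨hp1, hp2⟩ := hp
    have hmb : 0 ≤ ⟪x j - p.1, b j - p.2⟫ := hB.1 (x j) (b j) p.1 p.2 (hbB j hj) hp1
    have hma : 0 ≤ ⟪y j - p.1, a j + p.2⟫ := by
      have h := hA.1 (y j) (a j) p.1 (-p.2) (haA j hj) hp2
      simpa [sub_neg_eq_add] using h
    have hφp : ⟪p.1 - x j, b j - p.2⟫ + ⟪p.1 - y j, a j + p.2⟫ ≤ 0 := by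
      rw [show p.1 - x j = -(x j - p.1) by abel, show p.1 - y j = -(y j - p.1) by abel,
        inner_neg_left, inner_neg_left]
      linarith
    have hX := inner_affine (x j) (y j) (a j) (b j) (z (j-1)) (w (j-1)) p.1 p.2
    have hz1 : ‖z j - p.1‖^2 = ‖z (j-1) - p.1‖^2
        - 2*(ρ j*γ j)*⟪z (j-1) - p.1, a j + b j⟫ + (ρ j*γ j)^2*‖a j + b j‖^2 := by
      rw [hz j hj, show z (j-1) - (ρ j*γ j) • (a j+b j) - p.1
        = (z (j-1) - p.1) - (ρ j*γ j) • (a j+b j) by abel]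
      exact norm_sub_smul_sq _ _ _
    have hw1 : ‖w j - p.2‖^2 = ‖w (j-1) - p.2‖^2
        - 2*(ρ j*γ j)*⟪w (j-1) - p.2, x j - y j⟫ + (ρ j*γ j)^2*‖x j - y j‖^2 := by
      rw [hw j hj, show w (j-1) - (ρ j*γ j) • (x j - y j) - p.2
        = (w (j-1) - p.2) - (ρ j*γ j) • (x j - y j) by abel]
      exact norm_sub_smul_sq _ _ _
    have hXγ : γ j * G j ≤ ⟪z (j-1) - p.1, a j + b j⟫ + ⟪w (j-1) - p.2, x j - y j⟫ := by
      rw [hX]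
      have h1 := hφγG j hj
      simp only [hφdef] at h1
      linarith [hφp, h1]
    obtain ⟨hρl, hρu⟩ := hA2 j hj
    have hργ : 0 ≤ ρ j * γ j := mul_nonneg (by linarith) (hγpos j hj).le
    have e1 : 2*(ρ j*γ j)*(γ j * G j)
        ≤ 2*(ρ j*γ j)*(⟪z (j-1) - p.1, a j + b j⟫ + ⟪w (j-1) - p.2, x j - y j⟫) :=
      mul_le_mul_of_nonneg_left hXγ (by linarith)
    have e2 : (1-ρbar)^2*((γ j)^2*(G j)) ≤ (ρ j*(2-ρ j))*((γ j)^2*(G j)) := by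
      apply mul_le_mul_of_nonneg_right _ (mul_nonneg (sq_nonneg _) (hGpos j hj).le)
      nlinarith [hρl, hρu, hρ0]
    have hGj : G j = ‖a j + b j‖^2 + ‖x j - y j‖^2 := rfl
    nlinarith [hz1, hw1, e1, e2, hGj]
  -- summation
  have hsum : ∀ p ∈ Se A B, ∀ m : ℕ,
      (∑ i ∈ Finset.Icc 1 m, (1-ρbar)^2*((γ i)^2*(G i)))
        + (‖z m - p.1‖^2 + ‖w m - p.2‖^2) ≤ ‖z 0 - p.1‖^2 + ‖w 0 - p.2‖^2 := by
    intro p hp m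
    induction m with
    | zero => simp
    | succ mm ih =>
      rw [Finset.sum_Icc_succ_top (Nat.le_add_left 1 mm)]
      have h := hstep p hp (mm+1) (Nat.le_add_left 1 mm)
      simp only [Nat.add_sub_cancel] at h
      linarith
  intro k hk
  refine ⟨⟨hbB k hk, haA k hk⟩, ?_⟩
  -- pick minimizing index
  obtain ⟨i, hiI, hmin⟩ := Finset.exists_min_image (Finset.Icc 1 k)
    (fun j => (γ j)^2*(G j)) ⟨1, by simp [hk]⟩
  obtain ⟨hi1, hik⟩ := Finset.mem_Icc.mp hiI
  have hcard : (Finset.Icc 1 k).card = k := by rw [Nat.card_Icc]; omega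
  have hsum_lb : ∀ p ∈ Se A B,
      (k:ℝ) * ((1-ρbar)^2*((γ i)^2*(G i))) ≤ ‖z 0 - p.1‖^2 + ‖w 0 - p.2‖^2 := by
    intro p hp
    have h1 : (Finset.Icc 1 k).card • ((1-ρbar)^2*((γ i)^2*(G i)))
        ≤ ∑ j ∈ Finset.Icc 1 k, (1-ρbar)^2*((γ j)^2*(G j)) := by
      apply Finset.card_nsmul_le_sum
      intro j hj
      exact mul_le_mul_of_nonneg_left (hmin j hj) (sq_nonneg _)
    rw [hcard, nsmul_eq_mul] at h1
    have h2 := hsum p hp k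
    have h3 : 0 ≤ ‖z k - p.1‖^2 + ‖w k - p.2‖^2 := by positivity
    linarith
  -- final bounds
  have hkpos : (0:ℝ) < (k:ℝ) := by exact_mod_cast Nat.pos_of_ne_zero (by omega)
  have hsk : 0 < Real.sqrt k := Real.sqrt_pos.mpr hkpos
  set m0 : ℝ := Real.sqrt k * (1-ρbar) * Real.sqrt (G i) / υ with hm0def
  have hm0 : 0 ≤ m0 := by
    apply div_nonneg _ hKpos.le
    exact mul_nonneg (mul_nonneg hsk.le hρpos.le) (Real.sqrt_nonneg _)
  have hm0d : m0 ≤ d₀ := by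
    rw [hd₀]
    apply le_csInf
    · obtain ⟨p, hp⟩ := hSe
      exact ⟨_, ⟨p, hp, rfl⟩⟩
    · rintro r ⟨p, hp, rfl⟩
      rw [Real.le_sqrt hm0]
      have hγsq : 1/υ^2 ≤ (γ i)^2 := by
        have h := hγlb i hi1
        have h2 : (1/υ)^2 ≤ (γ i)^2 := by
          apply pow_le_pow_left₀ (by positivity) h
        calc 1/υ^2 = (1/υ)^2 := by ring
          _ ≤ (γ i)^2 := h2
      have hm0sq : m0^2 = (k:ℝ)*(1-ρbar)^2*(G i)*(1/υ^2) := by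
        rw [hm0def]
        rw [div_pow, mul_pow, mul_pow, Real.sq_sqrt hkpos.le, Real.sq_sqrt (hGpos i hi1).le]
        ring
      have h4 := hsum_lb p hp
      have h5 : (k:ℝ)*(1-ρbar)^2*(G i)*(1/υ^2) ≤ (k:ℝ)*(1-ρbar)^2*(G i)*((γ i)^2) := by
        apply mul_le_mul_of_nonneg_left hγsq
        positivity
      calc m0^2 = (k:ℝ)*(1-ρbar)^2*(G i)*(1/υ^2) := hm0sq
        _ ≤ (k:ℝ)*(1-ρbar)^2*(G i)*((γ i)^2) := h5
        _ = (k:ℝ)*((1-ρbar)^2*((γ i)^2*(G i))) := by ring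
        _ ≤ ‖z 0 - p.1‖^2 + ‖w 0 - p.2‖^2 := h4
      positivity
  have hGbound : Real.sqrt (G i) ≤ d₀ * υ / (Real.sqrt k * (1-ρbar)) := by
    have hden : 0 < Real.sqrt k * (1-ρbar) := mul_pos hsk hρpos
    rw [le_div_iff₀ hden]
    have h6 : m0 * υ = Real.sqrt (G i) * (Real.sqrt k * (1-ρbar)) := by
      rw [hm0def]; field_simp
    have h7 : m0 * υ ≤ d₀ * υ := mul_le_mul_of_nonneg_right hm0d hKpos.le
    linarith
  refine ⟨i, hi1, hik, ?_, ?_⟩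
  · have h8 : ‖a i + b i‖ ≤ Real.sqrt (G i) := by
      rw [show ‖a i + b i‖ = Real.sqrt (‖a i + b i‖^2) by
        rw [Real.sqrt_sq (norm_nonneg _)]]
      apply Real.sqrt_le_sqrt
      have : 0 ≤ ‖x i - y i‖^2 := by positivity
      simp only [hGdef]; linarith
    linarith
  · have h8 : ‖x i - y i‖ ≤ Real.sqrt (G i) := by
      rw [show ‖x i - y i‖ = Real.sqrt (‖x i - y i‖^2) by
        rw [Real.sqrt_sq (norm_nonneg _)]]
      apply Real.sqrt_le_sqrt
      have : 0 ≤ ‖a i + b i‖^2 := by positivity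
      simp only [hGdef]; linarith
    linarith
end

section
/- In the parallel inexact projective splitting method with error tolerance σ ∈ [0,1), where b_k ∈ B^{ε^x_k}(x_k) with λ_k(b_k - w_{k-1}) = z_{k-1} - x_k + r^x_k and ‖r^x_k‖² + 2λ_kε^x_k ≤ σ(‖x_k - z_{k-1}‖² + ‖λ_k(b_k - w_{k-1})‖²), and a_k ∈ A^{ε^y_k}(y_k) with the analogous condition for parameter μ_k, the decomposable separator φ_k associated with (x_k,b_k,ε^x_k) and (y_k,a_k,ε^y_k) satisfies φ_k(z_{k-1},w_{k-1}) ≥ ((1-σ)/4) ξ_k (‖a_k+b_k‖² + ‖x_k-y_k‖²) ≥ 0, where ξ_k = min{λ_k, 1/λ_k, μ_k, 1/μ_k}. Moreover ∇φ_k = 0 implies (x_k, b_k) = (y_k, -a_k) ∈ S_e(A,B). -/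
open RealInnerProductSpace Finset

lemma enl_zero_mem {n : ℕ} {T : Euc n → Set (Euc n)} (hT : MaxMono T) {z v : Euc n}
    (h : v ∈ enl T 0 z) : v ∈ T z := by
  set S : Euc n → Set (Euc n) := fun z₀ => T z₀ ∪ {u | z₀ = z ∧ u = v} with hS
  have hmono : Mono S := by
    rintro z₁ v₁ z₂ v₂ (h₁ | ⟨he₁, hv₁⟩) (h₂ | ⟨he₂, hv₂⟩)
    · exact hT.1 _ _ _ _ h₁ h₂
    · rw [he₂, hv₂]
      have := h z₁ v₁ h₁
      simpa using this
    · rw [he₁, hv₁]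
      have := h z₂ v₂ h₂
      have h2 : ⟪z - z₂, v - v₂⟫ = ⟪z₂ - z, v₂ - v⟫ := by
        rw [← inner_neg_neg]; simp
      rw [h2]; simpa using this
    · rw [he₁, hv₁, he₂, hv₂]
      simp
  have heq := hT.2 S hmono (fun z₀ => Set.subset_union_left) z
  have : v ∈ S z := Or.inr ⟨rfl, rfl⟩
  rwa [heq] at this

set_option maxHeartbeats 1000000 in
theorem parallel_inexact_separator_bound {n : ℕ} (A B : Euc n → Set (Euc n))
    (hA : MaxMono A) (hB : MaxMono B)
    (σ lam mu εx εy : ℝ) (hσ : σ ∈ Set.Ico (0 : ℝ) 1)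
    (hlam : 0 < lam) (hmu : 0 < mu) (hεx : 0 ≤ εx) (hεy : 0 ≤ εy)
    (z w x b y a rx ry : Euc n)
    (hbB : b ∈ enl B εx x)
    (hbeq : lam • (b - w) = z - x + rx)
    (hberr : ‖rx‖ ^ 2 + 2 * lam * εx ≤ σ * (‖x - z‖ ^ 2 + ‖lam • (b - w)‖ ^ 2))
    (haA : a ∈ enl A εy y)
    (haeq : mu • (a + w) = z - y + ry)
    (haerr : ‖ry‖ ^ 2 + 2 * mu * εy ≤ σ * (‖y - z‖ ^ 2 + ‖mu • (a + w)‖ ^ 2))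
    (ξ : ℝ) (hξ : ξ = min (min lam (1 / lam)) (min mu (1 / mu))) :
    (⟪z - x, b - w⟫ + ⟪z - y, a + w⟫ - εx - εy
      ≥ (1 - σ) / 4 * ξ * (‖a + b‖ ^ 2 + ‖x - y‖ ^ 2)) ∧
    (0 ≤ (1 - σ) / 4 * ξ * (‖a + b‖ ^ 2 + ‖x - y‖ ^ 2)) ∧
    (a + b = 0 → x - y = 0 → x = y ∧ b = -a ∧ (x, b) ∈ Se A B) := by
  obtain ⟨hσ0, hσ1⟩ := hσ
  have hξpos : 0 < ξ := by
    rw [hξ]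
    exact lt_min (lt_min hlam (one_div_pos.mpr hlam)) (lt_min hmu (one_div_pos.mpr hmu))
  have hξlam : ξ ≤ lam := hξ ▸ (min_le_left _ _).trans (min_le_left _ _)
  have hξlam' : ξ ≤ 1 / lam := hξ ▸ (min_le_left _ _).trans (min_le_right _ _)
  have hξmu : ξ ≤ mu := hξ ▸ (min_le_right _ _).trans (min_le_left _ _)
  have hξmu' : ξ ≤ 1 / mu := hξ ▸ (min_le_right _ _).trans (min_le_right _ _)
  -- x part
  have e1 : lam * ⟪z - x, b - w⟫ = ‖x - z‖ ^ 2 + ⟪z - x, rx⟫ := by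
    have : ⟪z - x, lam • (b - w)⟫ = ⟪z - x, z - x + rx⟫ := by rw [hbeq]
    rw [real_inner_smul_right,
      show (⟪z - x, z - x + rx⟫ : ℝ) = ‖x - z‖ ^ 2 + ⟪z - x, rx⟫ from by
        rw [inner_add_right, real_inner_self_eq_norm_sq, norm_sub_rev]] at this
    exact this
  have e2 : lam ^ 2 * ‖b - w‖ ^ 2 = ‖x - z‖ ^ 2 + 2 * ⟪z - x, rx⟫ + ‖rx‖ ^ 2 := by
    have : ‖lam • (b - w)‖ ^ 2 = ‖z - x + rx‖ ^ 2 := by rw [hbeq]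
    rw [norm_smul, norm_add_sq_real] at this
    rw [← norm_neg (z - x), neg_sub] at this
    rw [mul_pow] at this
    rw [← this]
    rw [Real.norm_eq_abs, sq_abs]
  have e2' : ‖lam • (b - w)‖ ^ 2 = lam ^ 2 * ‖b - w‖ ^ 2 := by
    rw [norm_smul, mul_pow, Real.norm_eq_abs, sq_abs]
  have h1 : ⟪z - x, b - w⟫ - εx ≥ (1 - σ) / 2 * ((1 / lam) * ‖x - z‖ ^ 2 + lam * ‖b - w‖ ^ 2) := by
    rw [e2'] at hberr
    rw [ge_iff_le, ← sub_nonneg]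
    have key : 0 ≤ (2 * lam) * ((⟪z - x, b - w⟫ - εx) - (1 - σ) / 2 * ((1 / lam) * ‖x - z‖ ^ 2 + lam * ‖b - w‖ ^ 2)) := by
      have hl : (2 * lam) * ((1 - σ) / 2 * ((1 / lam) * ‖x - z‖ ^ 2 + lam * ‖b - w‖ ^ 2))
          = (1 - σ) * (‖x - z‖ ^ 2 + lam ^ 2 * ‖b - w‖ ^ 2) := by
        have hinv : lam * (1 / lam) = 1 := by field_simp
        linear_combination ((1 - σ) * ‖x - z‖ ^ 2) * hinv
      rw [mul_sub, hl]
      linarith [hberr, e1, e2]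
    have key' : 2 * lam * 0 ≤ 2 * lam * ((⟪z - x, b - w⟫ - εx) - (1 - σ) / 2 * ((1 / lam) * ‖x - z‖ ^ 2 + lam * ‖b - w‖ ^ 2)) := by
      linarith [key]
    linarith [le_of_mul_le_mul_left key' (by positivity : (0:ℝ) < 2 * lam)]
  -- y part
  have f1 : mu * ⟪z - y, a + w⟫ = ‖y - z‖ ^ 2 + ⟪z - y, ry⟫ := by
    have : ⟪z - y, mu • (a + w)⟫ = ⟪z - y, z - y + ry⟫ := by rw [haeq]
    rw [real_inner_smul_right,
      show (⟪z - y, z - y + ry⟫ : ℝ) = ‖y - z‖ ^ 2 + ⟪z - y, ry⟫ from by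
        rw [inner_add_right, real_inner_self_eq_norm_sq, norm_sub_rev]] at this
    exact this
  have f2 : mu ^ 2 * ‖a + w‖ ^ 2 = ‖y - z‖ ^ 2 + 2 * ⟪z - y, ry⟫ + ‖ry‖ ^ 2 := by
    have : ‖mu • (a + w)‖ ^ 2 = ‖z - y + ry‖ ^ 2 := by rw [haeq]
    rw [norm_smul, norm_add_sq_real] at this
    rw [← norm_neg (z - y), neg_sub] at this
    rw [mul_pow] at this
    rw [← this, Real.norm_eq_abs, sq_abs]
  have f2' : ‖mu • (a + w)‖ ^ 2 = mu ^ 2 * ‖a + w‖ ^ 2 := by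
    rw [norm_smul, mul_pow, Real.norm_eq_abs, sq_abs]
  have h2 : ⟪z - y, a + w⟫ - εy ≥ (1 - σ) / 2 * ((1 / mu) * ‖y - z‖ ^ 2 + mu * ‖a + w‖ ^ 2) := by
    rw [f2'] at haerr
    rw [ge_iff_le, ← sub_nonneg]
    have key : 0 ≤ (2 * mu) * ((⟪z - y, a + w⟫ - εy) - (1 - σ) / 2 * ((1 / mu) * ‖y - z‖ ^ 2 + mu * ‖a + w‖ ^ 2)) := by
      have hl : (2 * mu) * ((1 - σ) / 2 * ((1 / mu) * ‖y - z‖ ^ 2 + mu * ‖a + w‖ ^ 2))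
          = (1 - σ) * (‖y - z‖ ^ 2 + mu ^ 2 * ‖a + w‖ ^ 2) := by
        have hinv : mu * (1 / mu) = 1 := by field_simp
        linear_combination ((1 - σ) * ‖y - z‖ ^ 2) * hinv
      rw [mul_sub, hl]
      linarith [haerr, f1, f2]
    have key' : 2 * mu * 0 ≤ 2 * mu * ((⟪z - y, a + w⟫ - εy) - (1 - σ) / 2 * ((1 / mu) * ‖y - z‖ ^ 2 + mu * ‖a + w‖ ^ 2)) := by
      linarith [key]
    linarith [le_of_mul_le_mul_left key' (by positivity : (0:ℝ) < 2 * mu)]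
  -- combination
  have hab : ‖a + b‖ ^ 2 ≤ 2 * (‖b - w‖ ^ 2 + ‖a + w‖ ^ 2) := by
    have : a + b = (b - w) + (a + w) := by abel
    rw [this, norm_add_sq_real]
    nlinarith [real_inner_le_norm (b - w) (a + w), sq_nonneg (‖b - w‖ - ‖a + w‖),
      norm_nonneg (b-w), norm_nonneg (a+w)]
  have hxy : ‖x - y‖ ^ 2 ≤ 2 * (‖x - z‖ ^ 2 + ‖y - z‖ ^ 2) := by
    have : x - y = (x - z) - (y - z) := by abel
    rw [this, norm_sub_sq_real]
    nlinarith [(abs_le.mp (abs_real_inner_le_norm (x - z) (y - z))).1,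
      sq_nonneg (‖x - z‖ - ‖y - z‖), norm_nonneg (x-z), norm_nonneg (y-z)]
  have hmain : ⟪z - x, b - w⟫ + ⟪z - y, a + w⟫ - εx - εy
      ≥ (1 - σ) / 4 * ξ * (‖a + b‖ ^ 2 + ‖x - y‖ ^ 2) := by
    have hs1 : ξ * ‖x - z‖ ^ 2 ≤ (1 / lam) * ‖x - z‖ ^ 2 :=
      mul_le_mul_of_nonneg_right hξlam' (sq_nonneg _)
    have hs2 : ξ * ‖b - w‖ ^ 2 ≤ lam * ‖b - w‖ ^ 2 :=
      mul_le_mul_of_nonneg_right hξlam (sq_nonneg _)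
    have hs3 : ξ * ‖y - z‖ ^ 2 ≤ (1 / mu) * ‖y - z‖ ^ 2 :=
      mul_le_mul_of_nonneg_right hξmu' (sq_nonneg _)
    have hs4 : ξ * ‖a + w‖ ^ 2 ≤ mu * ‖a + w‖ ^ 2 :=
      mul_le_mul_of_nonneg_right hξmu (sq_nonneg _)
    have h1σ : (0:ℝ) ≤ 1 - σ := by linarith
    have hhalf : (0:ℝ) ≤ (1 - σ) / 2 := by linarith
    have hc : (0:ℝ) ≤ (1 - σ) / 4 * ξ :=
      mul_nonneg (by linarith) hξpos.le
    have habxy : ‖a + b‖ ^ 2 + ‖x - y‖ ^ 2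
        ≤ 2 * (‖b - w‖ ^ 2 + ‖a + w‖ ^ 2) + 2 * (‖x - z‖ ^ 2 + ‖y - z‖ ^ 2) := by
      linarith
    have step := mul_le_mul_of_nonneg_left habxy hc
    have m1 := mul_le_mul_of_nonneg_left hs1 hhalf
    have m2 := mul_le_mul_of_nonneg_left hs2 hhalf
    have m3 := mul_le_mul_of_nonneg_left hs3 hhalf
    have m4 := mul_le_mul_of_nonneg_left hs4 hhalf
    have keyeq : (1 - σ) / 4 * ξ * (2 * (‖b - w‖ ^ 2 + ‖a + w‖ ^ 2) + 2 * (‖x - z‖ ^ 2 + ‖y - z‖ ^ 2))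
        = (1 - σ) / 2 * (ξ * ‖x - z‖ ^ 2) + (1 - σ) / 2 * (ξ * ‖b - w‖ ^ 2)
          + (1 - σ) / 2 * (ξ * ‖y - z‖ ^ 2) + (1 - σ) / 2 * (ξ * ‖a + w‖ ^ 2) := by
      ring
    have e1' : (1 - σ) / 2 * (1 / lam * ‖x - z‖ ^ 2 + lam * ‖b - w‖ ^ 2)
        = (1 - σ) / 2 * (1 / lam * ‖x - z‖ ^ 2) + (1 - σ) / 2 * (lam * ‖b - w‖ ^ 2) := by ring
    have e2'' : (1 - σ) / 2 * (1 / mu * ‖y - z‖ ^ 2 + mu * ‖a + w‖ ^ 2)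
        = (1 - σ) / 2 * (1 / mu * ‖y - z‖ ^ 2) + (1 - σ) / 2 * (mu * ‖a + w‖ ^ 2) := by ring
    linarith [h1, h2, step]
  refine ⟨hmain, ?_, ?_⟩
  · have h1σ : (0:ℝ) ≤ 1 - σ := by linarith
    have := hξpos.le
    positivity
  · intro hab0 hxy0
    have hxy' : x = y := by rwa [sub_eq_zero] at hxy0
    have hba : b = -a := by
      have : b = -a + (a + b) := by abel
      rw [hab0] at this; simpa using this
    refine ⟨hxy', hba, ?_⟩
    have hsum : ⟪z - x, b - w⟫ + ⟪z - y, a + w⟫ = 0 := by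
      subst hxy'
      rw [← inner_add_right]
      have : b - w + (a + w) = a + b := by abel
      rw [this, hab0, inner_zero_right]
    have hε : -εx - εy ≥ 0 := by
      have hm := hmain
      rw [hab0, hxy0] at hm
      have h0 : (1 - σ) / 4 * ξ * (‖(0:Euc n)‖ ^ 2 + ‖(0:Euc n)‖ ^ 2) = 0 := by simp
      rw [h0] at hm
      linarith [hsum, hm]
    have hεx0 : εx = 0 := by linarith
    have hεy0 : εy = 0 := by linarith
    rw [hεx0] at hbB
    rw [hεy0] at haA
    have hbBx : b ∈ B x := enl_zero_mem hB hbB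
    have haAy : a ∈ A y := enl_zero_mem hA haA
    exact ⟨hbBx, by rw [hba, neg_neg]; rwa [hxy']⟩
end

section
/- In the sequential inexact projective splitting method with σ ∈ [0,1/2), where λ_k b_k + x_k = z_{k-1} + λ_k w_{k-1} with b_k ∈ B(x_k) (exact), and λ_k a_k + y_k = x_k - λ_k w_{k-1} + r_k with a_k ∈ A^{ε^y_k}(y_k) and ‖r_k‖² + 2λ_k ε^y_k ≤ σ(‖y_k - x_k‖² + ‖λ_k(a_k + w_{k-1})‖²), the separator φ_k(z,w) = ⟨z-x_k, b_k-w⟩ + ⟨z-y_k, a_k+w⟩ - ε^y_k satisfies φ_k(z_{k-1},w_{k-1}) ≥ ((1-2σ)/2) τ_k (‖a_k+b_k‖² + ‖x_k-y_k‖²) ≥ 0, where τ_k = min{λ_k, 1/λ_k}. -/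
open RealInnerProductSpace Finset

set_option maxHeartbeats 1000000 in
theorem sequential_inexact_separator_bound {n : ℕ} (A B : Euc n → Set (Euc n))
    (hA : MaxMono A) (hB : MaxMono B)
    (σ lam εy : ℝ) (hσ : σ ∈ Set.Ico (0 : ℝ) (1 / 2))
    (hlam : 0 < lam) (hεy : 0 ≤ εy)
    (z w x b y a r : Euc n)
    (hbB : b ∈ B x)
    (hbeq : lam • b + x = z + lam • w)
    (haA : a ∈ enl A εy y)
    (haeq : lam • a + y = x - lam • w + r)
    (haerr : ‖r‖ ^ 2 + 2 * lam * εy ≤ σ * (‖y - x‖ ^ 2 + ‖lam • (a + w)‖ ^ 2))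
    (τ : ℝ) (hτ : τ = min lam (1 / lam)) :
    (⟪z - x, b - w⟫ + ⟪z - y, a + w⟫ - εy
      ≥ (1 - 2 * σ) / 2 * τ * (‖a + b‖ ^ 2 + ‖x - y‖ ^ 2)) ∧
    (0 ≤ (1 - 2 * σ) / 2 * τ * (‖a + b‖ ^ 2 + ‖x - y‖ ^ 2)) := by
  obtain ⟨hσ0, hσ2⟩ := hσ
  have hσ2' : 1 - 2 * σ > 0 := by linarith
  -- basic vector identities
  have hzx : z - x = lam • (b - w) := by linear_combination (norm := module) -hbeq
  have hxy : x - y = lam • (a + w) - r := by linear_combination (norm := module) -haeq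
  set u := b - w with hu
  set v := a + w with hv
  -- scalar abbreviations
  set P := ‖u‖ ^ 2 with hP
  set Q := ⟪u, v⟫ with hQ
  set S := ‖v‖ ^ 2 with hSdef
  set T := ⟪r, v⟫ with hT
  set R := ‖r‖ ^ 2 with hR
  set AB := ‖a + b‖ ^ 2 with hABdef
  set D := ‖x - y‖ ^ 2 with hDdef
  have hP0 : 0 ≤ P := sq_nonneg _
  have hS0 : 0 ≤ S := sq_nonneg _
  have hAB0 : 0 ≤ AB := sq_nonneg _
  have hD0 : 0 ≤ D := sq_nonneg _
  -- τ bounds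
  have hτlam : τ ≤ lam := by rw [hτ]; exact min_le_left _ _
  have hτmul : τ * lam ≤ 1 := by
    have h1 : τ ≤ 1 / lam := by rw [hτ]; exact min_le_right _ _
    calc τ * lam ≤ (1 / lam) * lam := by nlinarith
      _ = 1 := by field_simp
  have hτ0 : 0 < τ := by rw [hτ]; exact lt_min hlam (by positivity)
  -- inner product computations
  have e1 : ⟪z - x, u⟫ = lam * P := by
    rw [hzx, real_inner_smul_left, hP, real_inner_self_eq_norm_sq]
  have ezy : z - y = lam • u + (lam • v - r) := by
    rw [← hzx, ← hxy]; abel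
  have e2 : ⟪z - y, v⟫ = lam * Q + (lam * S - T) := by
    rw [ezy, inner_add_left, inner_sub_left, real_inner_smul_left,
      real_inner_smul_left, hQ, hSdef, real_inner_self_eq_norm_sq, hT]
  -- norms
  have hABeq : AB = P + 2 * Q + S := by
    have huv : a + b = u + v := by rw [hu, hv]; abel
    rw [hABdef, huv, @norm_add_sq_real, hP, hQ, hSdef]
  have hDeq : D = lam ^ 2 * S - 2 * lam * T + R := by
    rw [hDdef, hxy, @norm_sub_sq_real, norm_smul, real_inner_smul_left,
      Real.norm_eq_abs, abs_of_pos hlam, mul_pow, hSdef, hR]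
    have hc : ⟪v, r⟫ = T := by rw [hT]; exact real_inner_comm r v
    rw [hc]; ring
  have hlamv : ‖lam • v‖ ^ 2 = lam ^ 2 * S := by
    rw [norm_smul, Real.norm_eq_abs, abs_of_pos hlam, mul_pow, hSdef]
  -- error criterion in scalar form
  have herr : R + 2 * lam * εy ≤ σ * (D + lam ^ 2 * S) := by
    have h1 : ‖y - x‖ = ‖x - y‖ := norm_sub_rev y x
    calc R + 2 * lam * εy = ‖r‖ ^ 2 + 2 * lam * εy := by rw [hR]
      _ ≤ σ * (‖y - x‖ ^ 2 + ‖lam • v‖ ^ 2) := haerr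
      _ = σ * (D + lam ^ 2 * S) := by rw [h1, hlamv, hDdef]
  -- `S ≤ 2 AB + 2 P`
  have hSle : S ≤ 2 * AB + 2 * P := by
    have h1 : ‖v‖ ≤ ‖a + b‖ + ‖u‖ := by
      have : v = (a + b) - u := by rw [hu, hv]; abel
      rw [this]; exact norm_sub_le _ _
    have h2 : 0 ≤ ‖v‖ := norm_nonneg _
    nlinarith [sq_nonneg (‖a + b‖ - ‖u‖), norm_nonneg (a + b), norm_nonneg u]
  -- key identity
  have key : 2 * lam * (lam * P + (lam * Q + (lam * S - T)) - εy)
      = lam ^ 2 * AB + lam ^ 2 * P + D - R - 2 * lam * εy := by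
    rw [hABeq, hDeq]; ring
  -- nonneg product terms
  have t1 : 0 ≤ (1 - 2 * σ) * lam * (lam - τ) * AB :=
    mul_nonneg (mul_nonneg (mul_nonneg (by linarith) hlam.le) (by linarith)) hAB0
  have t2 : 0 ≤ σ * lam ^ 2 * (2 * AB + 2 * P - S) :=
    mul_nonneg (mul_nonneg hσ0 (sq_nonneg _)) (by linarith)
  have t3 : 0 ≤ (1 - 2 * σ) * lam ^ 2 * P :=
    mul_nonneg (mul_nonneg (by linarith) (sq_nonneg _)) hP0
  have t4 : 0 ≤ (1 - 2 * σ) * (1 - τ * lam) * D :=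
    mul_nonneg (mul_nonneg (by linarith) (by linarith)) hD0
  have t5 : 0 ≤ σ * D := mul_nonneg hσ0 hD0
  have hineq : 0 ≤ σ * (D + lam ^ 2 * S) - (R + 2 * lam * εy) := by linarith
  have expand : 2 * lam * (lam * P + (lam * Q + (lam * S - T)) - εy)
      - 2 * lam * ((1 - 2 * σ) / 2 * τ * (AB + D))
      = (1 - 2 * σ) * lam * (lam - τ) * AB + σ * lam ^ 2 * (2 * AB + 2 * P - S)
        + (1 - 2 * σ) * lam ^ 2 * P + (1 - 2 * σ) * (1 - τ * lam) * D + σ * D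
        + (σ * (D + lam ^ 2 * S) - (R + 2 * lam * εy)) := by
    linear_combination key
  have hmain : 2 * lam * ((1 - 2 * σ) / 2 * τ * (AB + D))
      ≤ 2 * lam * (lam * P + (lam * Q + (lam * S - T)) - εy) := by
    linarith
  have hgoal1 : ⟪z - x, u⟫ + ⟪z - y, v⟫ - εy
      ≥ (1 - 2 * σ) / 2 * τ * (AB + D) := by
    rw [e1, e2]
    have h2lam : (0 : ℝ) < 2 * lam := by linarith
    exact (mul_le_mul_iff_right₀ h2lam).mp hmain
  refine ⟨hgoal1, ?_⟩
  have : 0 ≤ (1 - 2 * σ) / 2 * τ := by positivity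
  exact mul_nonneg this (by linarith)
end
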